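/- For every split-schedule S of a BPMSTP instance there exists a feasible schedule S' such that: every job is assigned to the same machine in S' as in S; on each machine, the set of occupied slots under S' equals the set of occupied slots under S (hence C_max(S') = C_max(S) and E(S') = E(S)); and for any two jobs j, j' assigned to the same machine, if min(T_j) < min(T_{j'}) in S then min(T'_j) < min(T'_{j'}) in S', i.e., the relative order of start times on each machine is preserved. -/

import Mathlib

/-- A BPMSTP instance: `N` jobs with processing times `p j` (`1 ≤ p j ≤ K`),
`M` machines with energy consumption rates `u h ≥ 0`, and a time horizon
`{1, …, K}` of time slots with costs `c t ≥ 0`. -/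
structure BInstance where
  N : ℕ
  M : ℕ
  K : ℕ
  hN : 0 < N
  hM : 0 < M
  hK : 0 < K
  p : Fin N → ℕ
  hp : ∀ j, 1 ≤ p j ∧ p j ≤ K
  u : Fin M → ℝ
  hu : ∀ h, 0 ≤ u h
  c : ℕ → ℝ
  hc : ∀ t, 0 ≤ c t

/-- A schedule assigns each job a machine and a set of `p j` time slots,
with jobs on the same machine using disjoint slot sets. -/
structure Schedule (I : BInstance) where
  mach : Fin I.N → Fin I.M
  slots : Fin I.N → Finset ℕ
  slots_subset : ∀ j, slots j ⊆ Finset.Icc 1 I.K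
  slots_card : ∀ j, (slots j).card = I.p j
  disj : ∀ j j', j ≠ j' → mach j = mach j' → Disjoint (slots j) (slots j')

namespace Schedule

variable {I : BInstance}

/-- A schedule is feasible if every job occupies consecutive time slots. -/
def Feasible (S : Schedule I) : Prop :=
  ∀ j, ∃ s, S.slots j = Finset.Ico s (s + I.p j)

/-- The makespan: the largest slot used by any job. -/
def Cmax (S : Schedule I) : ℕ :=
  Finset.univ.sup fun j => (S.slots j).sup id

/-- The total energy cost. -/
def TEC (S : Schedule I) : ℝ :=
  ∑ j, I.u (S.mach j) * ∑ t ∈ S.slots j, I.c t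

/-- Two schedules are equivalent if they have the same makespan and the same TEC. -/
def Equivalent (S S' : Schedule I) : Prop :=
  S.Cmax = S'.Cmax ∧ S.TEC = S'.TEC

theorem slots_nonempty (S : Schedule I) (j : Fin I.N) : (S.slots j).Nonempty := by
  rw [← Finset.card_pos, S.slots_card]
  exact (I.hp j).1

/-- Slot `t` is occupied on machine `h`: some job assigned to `h` contains `t`. -/
def Occupied (S : Schedule I) (h : Fin I.M) (t : ℕ) : Prop :=
  ∃ j, S.mach j = h ∧ t ∈ S.slots j

/-- A split-schedule: for every job `j`, every slot between `min (T j)` and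
`max (T j)` is occupied on the machine of `j`. -/
def IsSplit (S : Schedule I) : Prop :=
  ∀ j t, (S.slots j).min' (S.slots_nonempty j) ≤ t →
    t ≤ (S.slots j).max' (S.slots_nonempty j) → S.Occupied (S.mach j) t

/-- `S` dominates `S'`. -/
def Dominates (S S' : Schedule I) : Prop :=
  S.Cmax ≤ S'.Cmax ∧ S.TEC ≤ S'.TEC ∧ (S.Cmax < S'.Cmax ∨ S.TEC < S'.TEC)

end Schedule

/-- The set of distinct processing times. -/
def PJ (I : BInstance) : Finset ℕ := Finset.univ.image I.p

/-- The set of jobs with processing time `d`. -/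
def Jd (I : BInstance) (d : ℕ) : Finset (Fin I.N) := Finset.univ.filter fun j => I.p j = d

/-- The makespan lower bound `max { ⌊(∑ p j) / M⌋, max p j }`. -/
def Klb (I : BInstance) : ℕ := max ((∑ j, I.p j) / I.M) (Finset.univ.sup I.p)

/-- `bcost I d t = ∑_{k=t}^{t+d-1} c k`, the cumulative cost of `d` slots from `t`. -/
def bcost (I : BInstance) (d t : ℕ) : ℝ := ∑ k ∈ Finset.Icc t (t + d - 1), I.c k



section Aux
open Finset

variable {I : BInstance} (S : Schedule I)

/-- start time of job `j`. -/
def S15mn (j : Fin I.N) : ℕ := (S.slots j).min' (S.slots_nonempty j)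

/-- occupied slots on machine `h`. -/
def S15O (h : Fin I.M) : Finset ℕ :=
  (Finset.univ.filter fun j => S.mach j = h).biUnion S.slots

/-- total length of jobs on the same machine starting earlier. -/
def S15A (j : Fin I.N) : ℕ :=
  ∑ j' ∈ Finset.univ.filter (fun j' => S.mach j' = S.mach j ∧ S15mn S j' < S15mn S j), I.p j'

/-- the rank of slot `t` among occupied slots on machine `h`. -/
def S15rank (h : Fin I.M) (t : ℕ) : ℕ := ((S15O S h).filter (fun x => x < t)).card

/-- the new slot set of job `j`. -/
def S15B (j : Fin I.N) : Finset ℕ :=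
  (S15O S (S.mach j)).filter fun t =>
    S15A S j ≤ S15rank S (S.mach j) t ∧ S15rank S (S.mach j) t < S15A S j + I.p j

lemma mem_S15O {h : Fin I.M} {t : ℕ} :
    t ∈ S15O S h ↔ ∃ j, S.mach j = h ∧ t ∈ S.slots j := by
  simp [S15O]

lemma S15O_iff_Occupied {h : Fin I.M} {t : ℕ} : t ∈ S15O S h ↔ S.Occupied h t :=
  mem_S15O S

lemma slots_subset_S15O (j : Fin I.N) : S.slots j ⊆ S15O S (S.mach j) := fun t ht =>
  (mem_S15O S).2 ⟨j, rfl, ht⟩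

lemma S15O_subset_Icc (h : Fin I.M) : S15O S h ⊆ Finset.Icc 1 I.K := by
  intro t ht
  obtain ⟨j, -, htj⟩ := (mem_S15O S).1 ht
  exact S.slots_subset j htj

lemma card_S15O (h : Fin I.M) :
    (S15O S h).card = ∑ j ∈ Finset.univ.filter (fun j => S.mach j = h), I.p j := by
  rw [S15O, Finset.card_biUnion]
  · exact Finset.sum_congr rfl fun j _ => S.slots_card j
  · intro x hx y hy hxy
    simp only [Finset.mem_coe, mem_filter] at hx hy
    exact S.disj x y hxy (hx.2.trans hy.2.symm)

lemma filter_lt_subset {s : Finset ℕ} {t t' : ℕ} (htt' : t ≤ t') :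
    s.filter (fun x => x < t) ⊆ s.filter (fun x => x < t') := fun x hx => by
  simp only [Finset.mem_filter] at hx ⊢
  exact ⟨hx.1, lt_of_lt_of_le hx.2 htt'⟩

lemma S15rank_mono {h : Fin I.M} {t t' : ℕ} (htt' : t ≤ t') :
    S15rank S h t ≤ S15rank S h t' :=
  Finset.card_le_card (filter_lt_subset htt')

lemma S15rank_strict {h : Fin I.M} {t t' : ℕ} (ht : t ∈ S15O S h) (htt' : t < t') :
    S15rank S h t < S15rank S h t' := by
  apply Finset.card_lt_card
  refine ⟨filter_lt_subset (le_of_lt htt'), ?_⟩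
  intro hsub
  have := hsub (Finset.mem_filter.2 ⟨ht, htt'⟩)
  simp at this

lemma S15rank_lt_of_rank_lt {h : Fin I.M} {t t' : ℕ}
    (hr : S15rank S h t < S15rank S h t') : t < t' := by
  by_contra hc
  exact absurd (S15rank_mono S (not_lt.1 hc)) (not_le.2 hr)

lemma S15rank_lt_card {h : Fin I.M} {t : ℕ} (ht : t ∈ S15O S h) :
    S15rank S h t < (S15O S h).card := by
  apply Finset.card_lt_card
  refine ⟨Finset.filter_subset _ _, fun hsub => ?_⟩
  have := Finset.mem_filter.1 (hsub ht)
  exact lt_irrefl t this.2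

lemma S15rank_injOn {h : Fin I.M} : Set.InjOn (S15rank S h) (S15O S h : Set ℕ) := by
  intro a ha b hb hab
  by_contra hne
  rcases lt_or_gt_of_ne hne with hlt | hlt
  · exact absurd hab (ne_of_lt (S15rank_strict S ha hlt))
  · exact absurd hab.symm (ne_of_lt (S15rank_strict S hb hlt))

lemma image_S15rank (h : Fin I.M) :
    (S15O S h).image (S15rank S h) = Finset.range (S15O S h).card := by
  apply Finset.eq_of_subset_of_card_le
  · intro r hr
    obtain ⟨t, ht, rfl⟩ := Finset.mem_image.1 hr
    exact Finset.mem_range.2 (S15rank_lt_card S ht)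
  · rw [Finset.card_range, Finset.card_image_of_injOn (S15rank_injOn S)]

lemma S15A_add_le (j : Fin I.N) :
    S15A S j + I.p j ≤ (S15O S (S.mach j)).card := by
  rw [card_S15O]
  have hj : j ∉ Finset.univ.filter
      (fun j' => S.mach j' = S.mach j ∧ S15mn S j' < S15mn S j) := by
    simp
  have heq : S15A S j + I.p j = ∑ x ∈ insert j (Finset.univ.filter
      (fun j' => S.mach j' = S.mach j ∧ S15mn S j' < S15mn S j)), I.p x := by
    rw [Finset.sum_insert hj, S15A, add_comm]
  rw [heq]
  apply Finset.sum_le_sum_of_subset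
  intro x hx
  rcases Finset.mem_insert.1 hx with rfl | hx
  · simp
  · simp only [mem_filter, Finset.mem_univ, true_and] at hx ⊢
    exact hx.1

lemma image_S15rank_B (j : Fin I.N) :
    (S15B S j).image (S15rank S (S.mach j)) = Finset.Ico (S15A S j) (S15A S j + I.p j) := by
  have hle := S15A_add_le S j
  ext r
  simp only [Finset.mem_image, Finset.mem_Ico]
  constructor
  · rintro ⟨t, ht, rfl⟩
    obtain ⟨-, h1, h2⟩ := Finset.mem_filter.1 ht
    exact ⟨h1, h2⟩
  · rintro ⟨h1, h2⟩
    have hr : r ∈ (S15O S (S.mach j)).image (S15rank S (S.mach j)) := by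
      rw [image_S15rank]
      exact Finset.mem_range.2 (lt_of_lt_of_le h2 hle)
    obtain ⟨t, ht, rfl⟩ := Finset.mem_image.1 hr
    exact ⟨t, Finset.mem_filter.2 ⟨ht, h1, h2⟩, rfl⟩

lemma card_S15B (j : Fin I.N) : (S15B S j).card = I.p j := by
  have h1 : ((S15B S j).image (S15rank S (S.mach j))).card = (S15B S j).card :=
    Finset.card_image_of_injOn ((S15rank_injOn S).mono (by
      intro x hx; exact Finset.mem_coe.2 (Finset.filter_subset _ _ hx)))
  rw [← h1, image_S15rank_B, Nat.card_Ico]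
  omega

lemma S15B_subset_O (j : Fin I.N) : S15B S j ⊆ S15O S (S.mach j) :=
  Finset.filter_subset _ _

lemma S15mn_mem (j : Fin I.N) : S15mn S j ∈ S.slots j := Finset.min'_mem _ _

lemma S15mn_le {j : Fin I.N} {t : ℕ} (ht : t ∈ S.slots j) : S15mn S j ≤ t :=
  Finset.min'_le _ _ ht

/-- When `g` is not occupied, the occupied slots below `g` are exactly the slots of
jobs starting before `g`. -/
lemma card_filter_lt (hS : S.IsSplit) {h : Fin I.M} {g : ℕ} (hg : g ∉ S15O S h) :
    ((S15O S h).filter (fun x => x < g)).card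
      = ∑ j ∈ Finset.univ.filter (fun j => S.mach j = h ∧ S15mn S j < g), I.p j := by
  have hset : (S15O S h).filter (fun x => x < g)
      = (Finset.univ.filter fun j => S.mach j = h ∧ S15mn S j < g).biUnion S.slots := by
    ext t
    simp only [Finset.mem_filter, Finset.mem_biUnion, Finset.mem_univ, true_and]
    constructor
    · rintro ⟨htO, htg⟩
      obtain ⟨j, hj, htj⟩ := (mem_S15O S).1 htO
      exact ⟨j, ⟨hj, lt_of_le_of_lt (S15mn_le S htj) htg⟩, htj⟩
    · rintro ⟨j, ⟨hj, hmn⟩, htj⟩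
      refine ⟨(mem_S15O S).2 ⟨j, hj, htj⟩, ?_⟩
      by_contra hc
      push_neg at hc
      have hgt : g < t := by
        rcases lt_or_eq_of_le hc with h1 | h1
        · exact h1
        · exact absurd ((mem_S15O S).2 ⟨j, hj, h1 ▸ htj⟩) hg
      have hmax : g ≤ (S.slots j).max' (S.slots_nonempty j) :=
        le_trans (le_of_lt hgt) (Finset.le_max' _ _ htj)
      have := hS j g (le_of_lt hmn) hmax
      rw [hj] at this
      exact hg ((S15O_iff_Occupied S).2 this)
  rw [hset, Finset.card_biUnion]
  · exact Finset.sum_congr rfl fun j _ => S.slots_card j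
  · intro x hx y hy hxy
    simp only [Finset.mem_coe, mem_filter] at hx hy
    exact S.disj x y hxy (hx.2.1.trans hy.2.1.symm)

/-- gaplessness of `S15B`. -/
lemma S15B_gapless (hS : S.IsSplit) {j : Fin I.N} {a b g : ℕ}
    (ha : a ∈ S15B S j) (hb : b ∈ S15B S j) (hag : a < g) (hgb : g < b) :
    g ∈ S15B S j := by
  obtain ⟨haO, hra1, hra2⟩ := Finset.mem_filter.1 ha
  obtain ⟨hbO, hrb1, hrb2⟩ := Finset.mem_filter.1 hb
  have hgO : g ∈ S15O S (S.mach j) := by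
    by_contra hg
    rcases lt_trichotomy (S15mn S j) g with hlt | heq | hgt
    · -- A j + p j ≤ card filter(<g) ≤ rank b
      have h1 : S15A S j + I.p j
          ≤ ∑ j' ∈ Finset.univ.filter (fun j' => S.mach j' = (S.mach j) ∧ S15mn S j' < g), I.p j' := by
        have hj : j ∉ Finset.univ.filter
            (fun j' => S.mach j' = S.mach j ∧ S15mn S j' < S15mn S j) := by simp
        rw [S15A, add_comm, ← Finset.sum_insert (f := I.p) hj]
        apply Finset.sum_le_sum_of_subset
        intro x hx
        rcases Finset.mem_insert.1 hx with rfl | hx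
        · simp [hlt]
        · simp only [mem_filter, Finset.mem_univ, true_and] at hx ⊢
          exact ⟨hx.1, lt_trans hx.2 hlt⟩
      rw [← card_filter_lt S hS hg] at h1
      have h2 : ((S15O S (S.mach j)).filter (fun x => x < g)).card ≤ S15rank S (S.mach j) b :=
        Finset.card_le_card (filter_lt_subset (le_of_lt hgb))
      omega
    · exact hg (heq ▸ slots_subset_S15O S j (S15mn_mem S j))
    · -- rank a < card filter(<g) ≤ A j
      have h1 : ∑ j' ∈ Finset.univ.filter (fun j' => S.mach j' = (S.mach j) ∧ S15mn S j' < g), I.p j'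
          ≤ S15A S j := by
        apply Finset.sum_le_sum_of_subset
        intro x hx
        simp only [mem_filter, Finset.mem_univ, true_and] at hx ⊢
        exact ⟨hx.1, lt_trans hx.2 hgt⟩
      rw [← card_filter_lt S hS hg] at h1
      have h2 : S15rank S (S.mach j) a < ((S15O S (S.mach j)).filter (fun x => x < g)).card := by
        apply Finset.card_lt_card
        refine ⟨filter_lt_subset (le_of_lt hag), fun hsub => ?_⟩
        have := Finset.mem_filter.1 (hsub (Finset.mem_filter.2 ⟨haO, hag⟩))
        exact lt_irrefl a this.2
      omega
  have h3 : S15rank S (S.mach j) a < S15rank S (S.mach j) g := S15rank_strict S haO hag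
  have h4 : S15rank S (S.mach j) g < S15rank S (S.mach j) b := S15rank_strict S hgO hgb
  exact Finset.mem_filter.2 ⟨hgO, by omega, by omega⟩

lemma S15B_nonempty (j : Fin I.N) : (S15B S j).Nonempty := by
  rw [← Finset.card_pos, card_S15B]
  exact (I.hp j).1

lemma S15B_eq_Ico (hS : S.IsSplit) (j : Fin I.N) :
    S15B S j = Finset.Ico ((S15B S j).min' (S15B_nonempty S j))
      ((S15B S j).min' (S15B_nonempty S j) + I.p j) := by
  set m := (S15B S j).min' (S15B_nonempty S j) with hm
  set M := (S15B S j).max' (S15B_nonempty S j) with hM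
  have hmB : m ∈ S15B S j := Finset.min'_mem _ _
  have hMB : M ∈ S15B S j := Finset.max'_mem _ _
  have hIcc : S15B S j = Finset.Icc m M := by
    apply Finset.eq_of_subset_of_card_le
    · intro t ht
      exact Finset.mem_Icc.2 ⟨Finset.min'_le _ _ ht, Finset.le_max' _ _ ht⟩
    · apply Finset.card_le_card
      intro t ht
      obtain ⟨h1, h2⟩ := Finset.mem_Icc.1 ht
      rcases eq_or_lt_of_le h1 with rfl | h1
      · exact hmB
      rcases eq_or_lt_of_le h2 with rfl | h2
      · exact hMB
      exact S15B_gapless S hS hmB hMB h1 h2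
  have hcard : (S15B S j).card = I.p j := card_S15B S j
  rw [hIcc] at hcard ⊢
  rw [Nat.card_Icc] at hcard
  have : m ≤ M := Finset.min'_le _ _ (Finset.max'_mem _ _)
  ext t
  simp only [Finset.mem_Icc, Finset.mem_Ico]
  omega

lemma S15mn_ne {j j' : Fin I.N} (hne : j ≠ j') (hmach : S.mach j = S.mach j') :
    S15mn S j ≠ S15mn S j' := by
  intro he
  have h1 := S15mn_mem S j
  have h2 := S15mn_mem S j'
  rw [he] at h1
  exact Finset.disjoint_left.1 (S.disj j j' hne hmach) h1 h2

lemma S15A_le_A {j j' : Fin I.N} (hmach : S.mach j = S.mach j')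
    (hmn : S15mn S j < S15mn S j') : S15A S j + I.p j ≤ S15A S j' := by
  have hj : j ∉ Finset.univ.filter
      (fun x => S.mach x = S.mach j ∧ S15mn S x < S15mn S j) := by simp
  rw [S15A, S15A, add_comm, ← Finset.sum_insert (f := I.p) hj]
  apply Finset.sum_le_sum_of_subset
  intro x hx
  rcases Finset.mem_insert.1 hx with rfl | hx
  · simp [hmach, hmn]
  · simp only [mem_filter, Finset.mem_univ, true_and] at hx ⊢
    exact ⟨hx.1.trans hmach, lt_trans hx.2 hmn⟩

lemma S15B_disj {j j' : Fin I.N} (hne : j ≠ j') (hmach : S.mach j = S.mach j') :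
    Disjoint (S15B S j) (S15B S j') := by
  rcases (S15mn_ne S hne hmach).lt_or_gt with hmn | hmn
  · rw [Finset.disjoint_left]
    intro t ht ht'
    obtain ⟨-, -, h2⟩ := Finset.mem_filter.1 ht
    obtain ⟨-, h3, -⟩ := Finset.mem_filter.1 ht'
    rw [← hmach] at h3
    have := S15A_le_A S hmach hmn
    omega
  · rw [Finset.disjoint_right]
    intro t ht ht'
    obtain ⟨-, -, h2⟩ := Finset.mem_filter.1 ht
    obtain ⟨-, h3, -⟩ := Finset.mem_filter.1 ht'
    rw [hmach] at h3
    have := S15A_le_A S hmach.symm hmn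
    omega

lemma biUnion_S15B (h : Fin I.M) :
    (Finset.univ.filter fun j => S.mach j = h).biUnion (S15B S) = S15O S h := by
  apply Finset.eq_of_subset_of_card_le
  · intro t ht
    obtain ⟨j, hj, htj⟩ := Finset.mem_biUnion.1 ht
    simp only [mem_filter] at hj
    exact hj.2 ▸ S15B_subset_O S j htj
  · rw [Finset.card_biUnion, card_S15O]
    · exact Finset.sum_le_sum fun j _ => le_of_eq (card_S15B S j).symm
    · intro x hx y hy hxy
      simp only [Finset.mem_coe, mem_filter] at hx hy
      exact S15B_disj S hxy (hx.2.trans hy.2.symm)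


lemma TEC_eq_of (R : Schedule I) (hmach : R.mach = S.mach)
    (hU : ∀ h, (Finset.univ.filter fun j => S.mach j = h).biUnion R.slots = S15O S h) :
    R.TEC = ∑ h, I.u h * ∑ t ∈ S15O S h, I.c t := by
  rw [Schedule.TEC,
    ← Finset.sum_fiberwise (s := Finset.univ) (g := S.mach)
      (f := fun j => I.u (R.mach j) * ∑ t ∈ R.slots j, I.c t)]
  apply Finset.sum_congr rfl
  intro h _
  have hdisj : (↑(Finset.univ.filter fun j => S.mach j = h) : Set (Fin I.N)).PairwiseDisjoint
      R.slots := by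
    intro x hx y hy hxy
    simp only [Finset.coe_filter, Set.mem_setOf_eq] at hx hy
    exact R.disj x y hxy (by rw [hmach, hx.2, hy.2])
  rw [← hU h, Finset.sum_biUnion hdisj, Finset.mul_sum]
  apply Finset.sum_congr rfl
  intro j hj
  simp only [mem_filter] at hj
  rw [hmach, hj.2]

end Aux

theorem statement15 (I : BInstance) (S : Schedule I) (hS : S.IsSplit) :
    ∃ S' : Schedule I, S'.Feasible ∧
      (∀ j, S'.mach j = S.mach j) ∧
      (∀ h t, S'.Occupied h t ↔ S.Occupied h t) ∧
      S'.Cmax = S.Cmax ∧ S'.TEC = S.TEC ∧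
      ∀ j j', S.mach j = S.mach j' →
        (S.slots j).min' (S.slots_nonempty j) < (S.slots j').min' (S.slots_nonempty j') →
        (S'.slots j).min' (S'.slots_nonempty j) < (S'.slots j').min' (S'.slots_nonempty j') := by
  classical
  refine ⟨⟨S.mach, S15B S,
      fun j => (S15B_subset_O S j).trans (S15O_subset_Icc S (S.mach j)),
      card_S15B S, fun j j' h1 h2 => S15B_disj S h1 h2⟩,
    fun j => ⟨(S15B S j).min' (S15B_nonempty S j), S15B_eq_Ico S hS j⟩,
    fun j => rfl, ?_, ?_, ?_, ?_⟩
  case _ =>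
    -- Occupied iff
    intro h t
    rw [show (Schedule.Occupied ⟨S.mach, S15B S, _, _, _⟩ h t) =
        (∃ j, S.mach j = h ∧ t ∈ S15B S j) from rfl, ← S15O_iff_Occupied]
    constructor
    · rintro ⟨j, hj, htj⟩
      exact hj ▸ S15B_subset_O S j htj
    · intro ht
      rw [← biUnion_S15B S h] at ht
      obtain ⟨j, hj, htj⟩ := Finset.mem_biUnion.1 ht
      simp only [Finset.mem_filter, Finset.mem_univ, true_and] at hj
      exact ⟨j, hj, htj⟩
  case _ =>
    -- Cmax
    have hU : Finset.univ.biUnion (S15B S) = Finset.univ.biUnion S.slots := by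
      ext t
      simp only [Finset.mem_biUnion, Finset.mem_univ, true_and]
      constructor
      · rintro ⟨j, htj⟩
        obtain ⟨j', -, h'⟩ := (mem_S15O S).1 (S15B_subset_O S j htj)
        exact ⟨j', h'⟩
      · rintro ⟨j, htj⟩
        have : t ∈ S15O S (S.mach j) := slots_subset_S15O S j htj
        rw [← biUnion_S15B S (S.mach j)] at this
        obtain ⟨j', -, h'⟩ := Finset.mem_biUnion.1 this
        exact ⟨j', h'⟩
    show Finset.univ.sup (fun j => (S15B S j).sup id) = _
    rw [Schedule.Cmax, ← Finset.sup_biUnion, ← Finset.sup_biUnion, hU]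
  case _ =>
    -- TEC
    rw [show Schedule.TEC ⟨S.mach, S15B S, _, _, _⟩ =
        ∑ h, I.u h * ∑ t ∈ S15O S h, I.c t from
      TEC_eq_of S ⟨S.mach, S15B S, _, _, _⟩ rfl (biUnion_S15B S),
      TEC_eq_of S S rfl (fun h => rfl)]
  case _ =>
    -- order preservation
    intro j j' hm hlt
    have haB : (S15B S j).min' (S15B_nonempty S j) ∈ S15B S j := Finset.min'_mem _ _
    have hbB : (S15B S j').min' (S15B_nonempty S j') ∈ S15B S j' := Finset.min'_mem _ _
    obtain ⟨-, -, h2⟩ := Finset.mem_filter.1 haB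
    obtain ⟨-, h3, -⟩ := Finset.mem_filter.1 hbB
    have hA := S15A_le_A S hm hlt
    apply S15rank_lt_of_rank_lt S (h := S.mach j)
    rw [← hm] at h3
    exact lt_of_lt_of_le (h2.trans_le hA) h3
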